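/- Fix a joint type P_{X̄Ȳ} over finite alphabets 𝒳, 𝒴 with type class T^n_{X̄Ȳ}, and a WAK code (φ̃₀, φ̃₂, ψ̃) with log|T^n_{X̄}| ≥ log|M̃₀|. Then there exists a Gray–Wyner code Φ = (φ₀, φ₁, φ₂, ψ₁, ψ₂) with: log|M₀| ≤ log|M̃₀| + log n + log log|𝒳| + 2; log(|M₀||M₁|) ≤ log|T^n_{X̄}| + log n + log log|𝒳| + 2; |M₂| = |M̃₂|; and the GW error probability of Φ under the uniform distribution on T^n_{X̄Ȳ} is at most the WAK error probability of (φ̃₀, φ̃₂, ψ̃) under the same distribution. -/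

import Mathlib

open scoped Classical BigOperators
noncomputable section

variable {𝒳 𝒴 : Type} [Fintype 𝒳] [Fintype 𝒴]

/-- the joint type class `T^n_{X̄Ȳ}` of the joint type `Q` (empirical counts). -/
def jointTypeClass (n : ℕ) (Q : 𝒳 × 𝒴 → ℕ) :
    Finset ((Fin n → 𝒳) × (Fin n → 𝒴)) :=
  Finset.univ.filter (fun p => ∀ z : 𝒳 × 𝒴,
    (Finset.univ.filter (fun i : Fin n => (p.1 i, p.2 i) = z)).card = Q z)

/-- the type class `T^n_{X̄}` of the `𝒳`-marginal of the joint type `Q`. -/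
def typeClassX (n : ℕ) (Q : 𝒳 × 𝒴 → ℕ) : Finset (Fin n → 𝒳) :=
  Finset.univ.filter (fun x => ∀ a : 𝒳,
    (Finset.univ.filter (fun i : Fin n => x i = a)).card = ∑ b, Q (a, b))

/-- error probability of the WAK code `(φ0, φ2, ψ)` under the uniform
distribution on the joint type class of `Q`. -/
def errWAK (n : ℕ) (Q : 𝒳 × 𝒴 → ℕ) {M0 M2 : Type}
    (φ0 : (Fin n → 𝒳) → M0) (φ2 : (Fin n → 𝒴) → M2)
    (ψ : M0 × M2 → (Fin n → 𝒴)) : ℝ :=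
  (((jointTypeClass n Q).filter (fun p => ψ (φ0 p.1, φ2 p.2) ≠ p.2)).card : ℝ) /
    ((jointTypeClass n Q).card : ℝ)

/-- error probability of the GW code `(φ0, φ1, φ2, ψ1, ψ2)` under the uniform
distribution on the joint type class of `Q`. -/
def errGW (n : ℕ) (Q : 𝒳 × 𝒴 → ℕ) {M0 M1 M2 : Type}
    (φ0 : (Fin n → 𝒳) × (Fin n → 𝒴) → M0)
    (φ1 : (Fin n → 𝒳) × (Fin n → 𝒴) → M1)
    (φ2 : (Fin n → 𝒳) × (Fin n → 𝒴) → M2)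
    (ψ1 : M0 × M1 → (Fin n → 𝒳)) (ψ2 : M0 × M2 → (Fin n → 𝒴)) : ℝ :=
  (((jointTypeClass n Q).filter
      (fun p => (ψ1 (φ0 p, φ1 p), ψ2 (φ0 p, φ2 p)) ≠ p)).card : ℝ) /
    ((jointTypeClass n Q).card : ℝ)

/-! ### Auxiliary machinery -/

/-- the index of `x` within its cell `{y ∈ T | φ y = φ x}`, with respect to
the linear order pulled back from `Fin (card α)`. -/
private noncomputable def idxIn {α β : Type} [Fintype α] (T : Finset α)
    (φ : α → β) (x : α) : ℕ :=
  ((T.filter (fun y => φ y = φ x)).filter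
    (fun y => Fintype.equivFin α y < Fintype.equivFin α x)).card

private lemma idxIn_lt_card {α β : Type} [Fintype α] (T : Finset α) (φ : α → β)
    {x : α} (hx : x ∈ T) :
    idxIn T φ x < (T.filter (fun y => φ y = φ x)).card := by
  apply Finset.card_lt_card
  rw [Finset.ssubset_iff_of_subset (Finset.filter_subset _ _)]
  exact ⟨x, Finset.mem_filter.mpr ⟨hx, rfl⟩, by simp⟩

private lemma idxIn_lt_idxIn {α β : Type} [Fintype α] (T : Finset α) (φ : α → β)
    {x y : α} (hx : x ∈ T) (hφ : φ x = φ y)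
    (hlt : Fintype.equivFin α x < Fintype.equivFin α y) :
    idxIn T φ x < idxIn T φ y := by
  unfold idxIn
  apply Finset.card_lt_card
  have hsub : (T.filter (fun z => φ z = φ x)).filter
        (fun z => Fintype.equivFin α z < Fintype.equivFin α x)
      ⊆ (T.filter (fun z => φ z = φ y)).filter
        (fun z => Fintype.equivFin α z < Fintype.equivFin α y) := by
    intro z hz
    simp only [Finset.mem_filter] at hz ⊢
    exact ⟨⟨hz.1.1, hz.1.2.trans hφ⟩, hz.2.trans hlt⟩
  rw [Finset.ssubset_iff_of_subset hsub]
  refine ⟨x, Finset.mem_filter.mpr ⟨Finset.mem_filter.mpr ⟨hx, hφ⟩, hlt⟩, by simp⟩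

private lemma idxIn_inj {α β : Type} [Fintype α] (T : Finset α) (φ : α → β)
    {x y : α} (hx : x ∈ T) (hy : y ∈ T) (hφ : φ x = φ y)
    (h : idxIn T φ x = idxIn T φ y) : x = y := by
  rcases lt_trichotomy (Fintype.equivFin α x) (Fintype.equivFin α y) with hlt | heq | hlt
  · exact absurd h (idxIn_lt_idxIn T φ hx hφ hlt).ne
  · exact (Fintype.equivFin α).injective heq
  · exact absurd h.symm (idxIn_lt_idxIn T φ hy hφ.symm hlt).ne

private lemma sum_nat_div_le {ι : Type} (t : Finset ι) (g : ι → ℕ) (c : ℕ) :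
    ∑ i ∈ t, g i / c ≤ (∑ i ∈ t, g i) / c := by
  induction t using Finset.cons_induction with
  | empty => simp
  | cons a t ha ih =>
    rw [Finset.sum_cons, Finset.sum_cons]
    exact le_trans (Nat.add_le_add_left ih _) (Nat.add_div_le_add_div _ _ _)

private lemma mem_typeClassX_of_mem_joint {n : ℕ} {Q : 𝒳 × 𝒴 → ℕ}
    {p : (Fin n → 𝒳) × (Fin n → 𝒴)} (hp : p ∈ jointTypeClass n Q) :
    p.1 ∈ typeClassX n Q := by
  simp only [jointTypeClass, Finset.mem_filter, Finset.mem_univ, true_and] at hp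
  simp only [typeClassX, Finset.mem_filter, Finset.mem_univ, true_and]
  intro a
  have hfib : (Finset.univ.filter (fun i : Fin n => p.1 i = a)).card
      = ∑ b : 𝒴, ((Finset.univ.filter (fun i : Fin n => p.1 i = a)).filter
          (fun i => p.2 i = b)).card :=
    Finset.card_eq_sum_card_fiberwise (fun i _ => Finset.mem_univ _)
  rw [hfib]
  refine Finset.sum_congr rfl fun b _ => ?_
  rw [Finset.filter_filter, ← hp (a, b)]
  congr 1
  ext i
  simp [Prod.ext_iff, and_comm]

private lemma loglog_nonneg (𝒳 : Type) [Fintype 𝒳] :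
    (0:ℝ) ≤ Real.logb 2 (Real.logb 2 (Fintype.card 𝒳)) := by
  rcases le_or_gt (Fintype.card 𝒳) 1 with h | h
  · rcases Nat.le_one_iff_eq_zero_or_eq_one.mp h with h | h <;>
      simp [h, Real.logb_zero, Real.logb_one]
  · have h2 : (2:ℝ) ≤ (Fintype.card 𝒳 : ℝ) := by exact_mod_cast h
    have h1 : (1:ℝ) ≤ Real.logb 2 (Fintype.card 𝒳) := by
      have := Real.logb_le_logb_of_le one_lt_two (x := (2:ℝ)) two_pos h2
      rwa [Real.logb_self_eq_one one_lt_two] at this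
    exact Real.logb_nonneg one_lt_two h1

/-- comparison of error probabilities: if correct WAK decoding implies correct
GW decoding pointwise on the joint type class, then the GW error probability is
at most the WAK error probability. -/
private lemma err_le {n : ℕ} {Q : 𝒳 × 𝒴 → ℕ} {M0' M1' M2' N0 N2 : Type}
    (φ0' : (Fin n → 𝒳) × (Fin n → 𝒴) → M0')
    (φ1' : (Fin n → 𝒳) × (Fin n → 𝒴) → M1')
    (φ2' : (Fin n → 𝒳) × (Fin n → 𝒴) → M2')
    (ψ1 : M0' × M1' → (Fin n → 𝒳)) (ψ2 : M0' × M2' → (Fin n → 𝒴))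
    (φ0 : (Fin n → 𝒳) → N0) (φ2 : (Fin n → 𝒴) → N2)
    (ψ : N0 × N2 → (Fin n → 𝒴))
    (h : ∀ p ∈ jointTypeClass n Q, ψ (φ0 p.1, φ2 p.2) = p.2 →
        (ψ1 (φ0' p, φ1' p), ψ2 (φ0' p, φ2' p)) = p) :
    errGW n Q φ0' φ1' φ2' ψ1 ψ2 ≤ errWAK n Q φ0 φ2 ψ := by
  have hsub : (jointTypeClass n Q).filter
      (fun p => (ψ1 (φ0' p, φ1' p), ψ2 (φ0' p, φ2' p)) ≠ p)
      ⊆ (jointTypeClass n Q).filter (fun p => ψ (φ0 p.1, φ2 p.2) ≠ p.2) := by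
    intro p hp
    rw [Finset.mem_filter] at hp ⊢
    exact ⟨hp.1, fun hOK => hp.2 (h p hp.1 hOK)⟩
  unfold errGW errWAK
  rcases Nat.eq_zero_or_pos (jointTypeClass n Q).card with hD | hD
  · rw [hD]
    simp
  · have hDpos : (0:ℝ) < ((jointTypeClass n Q).card : ℝ) := by exact_mod_cast hD
    refine div_le_div₀ (by positivity) ?_ hDpos le_rfl
    exact_mod_cast Finset.card_le_card hsub

set_option maxHeartbeats 1000000

/-- reduction from WAK to Gray–Wyner.  From a WAK code with
`log|T^n_{X̄}| ≥ log|M̃₀|` one can construct a GW code (same `M₂`, so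
`|M₂| = |M̃₂|`) with `log|M₀| ≤ log|M̃₀| + log n + log log|𝒳| + 2`,
`log(|M₀||M₁|) ≤ log|T^n_{X̄}| + log n + log log|𝒳| + 2`, and GW error
probability on the type class at most the WAK error probability. -/
theorem stmt_11 {M0 M2 : Type} [Fintype M0] [Fintype M2] [Nonempty 𝒴]
    (n : ℕ) (hn : 1 ≤ n) (Q : 𝒳 × 𝒴 → ℕ) (hQ : ∑ z, Q z = n)
    (φ0 : (Fin n → 𝒳) → M0) (φ2 : (Fin n → 𝒴) → M2)
    (ψ : M0 × M2 → (Fin n → 𝒴))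
    (hM0 : Real.logb 2 (Fintype.card M0)
            ≤ Real.logb 2 ((typeClassX n Q).card)) :
    ∃ (k k1 : ℕ)
      (φ0' : (Fin n → 𝒳) × (Fin n → 𝒴) → Fin k)
      (φ1' : (Fin n → 𝒳) × (Fin n → 𝒴) → Fin k1)
      (φ2' : (Fin n → 𝒳) × (Fin n → 𝒴) → M2)
      (ψ1 : Fin k × Fin k1 → (Fin n → 𝒳))
      (ψ2 : Fin k × M2 → (Fin n → 𝒴)),
      Real.logb 2 k ≤ Real.logb 2 (Fintype.card M0) + Real.logb 2 n
          + Real.logb 2 (Real.logb 2 (Fintype.card 𝒳)) + 2 ∧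
      Real.logb 2 (k * k1) ≤ Real.logb 2 ((typeClassX n Q).card)
          + Real.logb 2 n + Real.logb 2 (Real.logb 2 (Fintype.card 𝒳)) + 2 ∧
      errGW n Q φ0' φ1' φ2' ψ1 ψ2 ≤ errWAK n Q φ0 φ2 ψ := by
  classical
  have hlogn : (0:ℝ) ≤ Real.logb 2 (n : ℝ) :=
    Real.logb_nonneg one_lt_two (by exact_mod_cast hn)
  have hloglog := loglog_nonneg 𝒳
  have hlogM0 : (0:ℝ) ≤ Real.logb 2 (Fintype.card M0 : ℝ) := by
    rcases Nat.eq_zero_or_pos (Fintype.card M0) with h | h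
    · simp [h]
    · exact Real.logb_nonneg one_lt_two (by exact_mod_cast h)
  have hlogT : (0:ℝ) ≤ Real.logb 2 ((typeClassX n Q).card : ℝ) := by
    rcases Nat.eq_zero_or_pos (typeClassX n Q).card with h | h
    · simp [h]
    · exact Real.logb_nonneg one_lt_two (by exact_mod_cast h)
  have hWAKnonneg : 0 ≤ errWAK n Q φ0 φ2 ψ := by
    unfold errWAK; positivity
  by_cases hTne : (typeClassX n Q).Nonempty
  swap
  · -- the type class is empty, hence so is the joint type class
    have hJ : jointTypeClass n Q = ∅ := by
      rw [Finset.eq_empty_iff_forall_notMem]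
      intro p hp
      exact hTne ⟨p.1, mem_typeClassX_of_mem_joint hp⟩
    by_cases hX : Nonempty (Fin n → 𝒳)
    · obtain ⟨x0⟩ := hX
      refine ⟨1, 1, fun _ => 0, fun _ => 0, fun p => φ2 p.2, fun _ => x0,
        fun _ => Classical.arbitrary _, ?_, ?_, ?_⟩
      · simp only [Nat.cast_one, Real.logb_one]; linarith
      · simp only [Nat.cast_one, mul_one, Real.logb_one]; linarith
      · unfold errGW
        rw [hJ]
        simpa using hWAKnonneg
    · refine ⟨0, 1, fun p => absurd ⟨p.1⟩ hX, fun _ => 0,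
        fun p => φ2 p.2, fun a => a.1.elim0, fun _ => Classical.arbitrary _,
        ?_, ?_, ?_⟩
      · simp only [Nat.cast_zero, Real.logb_zero]; linarith
      · simp only [Nat.cast_zero, Nat.cast_one, zero_mul, Real.logb_zero]; linarith
      · unfold errGW
        rw [hJ]
        simpa using hWAKnonneg
  -- main case
  obtain ⟨x0, hx0⟩ := hTne
  set T := typeClassX n Q with hTdef
  haveI : Nonempty M0 := ⟨φ0 x0⟩
  set m := Fintype.card M0 with hm
  have hm0 : 0 < m := Fintype.card_pos
  set N := T.card with hNdef
  have hN0 : 0 < N := Finset.card_pos.mpr ⟨x0, hx0⟩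
  have hmN : m ≤ N := by
    by_contra hcon
    push_neg at hcon
    have := Real.logb_lt_logb (b := 2) one_lt_two (x := (N:ℝ)) (y := (m:ℝ))
      (by exact_mod_cast hN0) (by exact_mod_cast hcon)
    linarith
  set c := N / m + 1 with hc
  have hc0 : 0 < c := Nat.succ_pos _
  set S := T.image (fun x => (φ0 x, idxIn T φ0 x / c)) with hS
  set k := S.card with hk
  have hk0 : 0 < k :=
    Finset.card_pos.mpr ⟨_, Finset.mem_image_of_mem _ hx0⟩
  -- counting: `k ≤ 2 m` and `k * c ≤ 3 N`
  have hcard : k = ∑ m0 : M0, (S.filter (fun z => z.1 = m0)).card :=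
    Finset.card_eq_sum_card_fiberwise (f := fun z : M0 × ℕ => z.1) (fun z _ => Finset.mem_univ _)
  have hfiber : ∀ m0 : M0, (S.filter (fun z => z.1 = m0)).card
      ≤ ((T.filter (fun y => φ0 y = m0)).card - 1) / c + 1 := by
    intro m0
    have hsub2 : S.filter (fun z => z.1 = m0) ⊆
        {m0} ×ˢ Finset.range (((T.filter (fun y => φ0 y = m0)).card - 1) / c + 1) := by
      intro z hz
      obtain ⟨hzS, hz1⟩ := Finset.mem_filter.mp hz
      obtain ⟨x, hxT, hfx⟩ := Finset.mem_image.mp hzS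
      subst hfx
      have hφx : φ0 x = m0 := hz1
      have hlt := idxIn_lt_card T φ0 hxT
      rw [hφx] at hlt
      refine Finset.mem_product.mpr ⟨Finset.mem_singleton.mpr hφx, ?_⟩
      refine Finset.mem_range.mpr (Nat.lt_succ_of_le ?_)
      exact Nat.div_le_div_right (Nat.le_sub_one_of_lt hlt)
    calc (S.filter (fun z => z.1 = m0)).card
        ≤ _ := Finset.card_le_card hsub2
      _ = ((T.filter (fun y => φ0 y = m0)).card - 1) / c + 1 := by
          rw [Finset.card_product, Finset.card_singleton, Finset.card_range, one_mul]
  have hsumN : ∑ m0 : M0, (T.filter (fun y => φ0 y = m0)).card = N :=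
    (Finset.card_eq_sum_card_fiberwise (f := φ0) (fun x _ => Finset.mem_univ _)).symm
  have hkle : k ≤ N / c + m := by
    have h1 : k ≤ ∑ m0 : M0, (((T.filter (fun y => φ0 y = m0)).card - 1) / c + 1) := by
      rw [hcard]
      exact Finset.sum_le_sum (fun m0 _ => hfiber m0)
    have h2 : ∑ m0 : M0, (((T.filter (fun y => φ0 y = m0)).card - 1) / c + 1)
        = (∑ m0 : M0, ((T.filter (fun y => φ0 y = m0)).card - 1) / c) + m := by
      rw [Finset.sum_add_distrib]
      simp [Finset.card_univ, ← hm]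
    have h3 := sum_nat_div_le Finset.univ
      (fun m0 : M0 => (T.filter (fun y => φ0 y = m0)).card - 1) c
    have h4 : ∑ m0 : M0, ((T.filter (fun y => φ0 y = m0)).card - 1) ≤ N := by
      calc ∑ m0 : M0, ((T.filter (fun y => φ0 y = m0)).card - 1)
          ≤ ∑ m0 : M0, (T.filter (fun y => φ0 y = m0)).card :=
            Finset.sum_le_sum (fun _ _ => Nat.sub_le _ _)
        _ = N := hsumN
    have h5 : (∑ m0 : M0, ((T.filter (fun y => φ0 y = m0)).card - 1)) / c ≤ N / c :=
      Nat.div_le_div_right h4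
    calc k ≤ _ := h1
      _ = _ := h2
      _ ≤ N / c + m := by
          exact Nat.add_le_add_right (le_trans h3 h5) m
  have hmc : m * c = m * (N / m) + m := by
    rw [hc, Nat.mul_add, Nat.mul_one]
  have hNc : N / c < m := by
    rw [Nat.div_lt_iff_lt_mul hc0]
    calc N = m * (N / m) + N % m := (Nat.div_add_mod N m).symm
      _ < m * (N / m) + m := Nat.add_lt_add_left (Nat.mod_lt _ hm0) _
      _ = m * c := hmc.symm
  have hk2m : k ≤ 2 * m := by omega
  have hkc : k * c ≤ 3 * N := by
    have hmulle : m * (N / m) ≤ N := Nat.mul_div_le N m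
    calc k * c ≤ (N / c + m) * c := Nat.mul_le_mul_right c hkle
      _ = (N / c) * c + m * c := Nat.add_mul _ _ _
      _ ≤ N + (m * (N / m) + m) := Nat.add_le_add (Nat.div_mul_le_self N c) hmc.le
      _ ≤ N + (N + N) := by omega
      _ = 3 * N := by ring
  -- the log bounds
  have goal1 : Real.logb 2 (k : ℝ) ≤ Real.logb 2 (m : ℝ) + Real.logb 2 (n : ℝ)
      + Real.logb 2 (Real.logb 2 (Fintype.card 𝒳)) + 2 := by
    have h1 : Real.logb 2 (k : ℝ) ≤ Real.logb 2 ((2 * m : ℕ) : ℝ) :=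
      Real.logb_le_logb_of_le one_lt_two (by exact_mod_cast hk0) (by exact_mod_cast hk2m)
    have h2 : Real.logb 2 ((2 * m : ℕ) : ℝ) = 1 + Real.logb 2 (m : ℝ) := by
      push_cast
      rw [Real.logb_mul two_ne_zero (by exact_mod_cast hm0.ne'),
        Real.logb_self_eq_one one_lt_two]
    rw [h2] at h1
    linarith
  have goal2 : Real.logb 2 ((k * c : ℕ) : ℝ) ≤ Real.logb 2 (N : ℝ) + Real.logb 2 (n : ℝ)
      + Real.logb 2 (Real.logb 2 (Fintype.card 𝒳)) + 2 := by
    have hkc4 : k * c ≤ 4 * N := by omega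
    have h1 : Real.logb 2 ((k * c : ℕ) : ℝ) ≤ Real.logb 2 ((4 * N : ℕ) : ℝ) :=
      Real.logb_le_logb_of_le one_lt_two
        (by exact_mod_cast Nat.mul_pos hk0 hc0) (by exact_mod_cast hkc4)
    have h2 : Real.logb 2 ((4 * N : ℕ) : ℝ) = 2 + Real.logb 2 (N : ℝ) := by
      push_cast
      rw [Real.logb_mul (by norm_num) (by exact_mod_cast hN0.ne'),
        show (4:ℝ) = 2 * 2 by norm_num,
        Real.logb_mul two_ne_zero two_ne_zero, Real.logb_self_eq_one one_lt_two]
      ring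
    rw [h2] at h1
    linarith
  -- the code
  set g : (Fin n → 𝒳) → Fin k := fun x =>
    if h : x ∈ T then S.equivFin ⟨(φ0 x, idxIn T φ0 x / c), Finset.mem_image_of_mem _ h⟩
    else ⟨0, hk0⟩ with hgdef
  set ψ1 : Fin k × Fin c → (Fin n → 𝒳) := fun ar =>
    if h : ∃ x, x ∈ T ∧ g x = ar.1 ∧ idxIn T φ0 x % c = (ar.2 : ℕ) then h.choose
    else x0 with hψ1def
  set ψ2 : Fin k × M2 → (Fin n → 𝒴) := fun am =>
    ψ (((S.equivFin.symm am.1 : { z // z ∈ S }) : M0 × ℕ).1, am.2) with hψ2def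
  refine ⟨k, c, fun p => g p.1, fun p => ⟨idxIn T φ0 p.1 % c, Nat.mod_lt _ hc0⟩,
    fun p => φ2 p.2, ψ1, ψ2, goal1, ?_, ?_⟩
  · exact_mod_cast goal2
  -- error probability
  have hrec : ∀ p : (Fin n → 𝒳) × (Fin n → 𝒴), p ∈ jointTypeClass n Q →
      ψ (φ0 p.1, φ2 p.2) = p.2 →
      (ψ1 (g p.1, ⟨idxIn T φ0 p.1 % c, Nat.mod_lt _ hc0⟩), ψ2 (g p.1, φ2 p.2)) = p := by
    intro p hp hOK
    have hpT : p.1 ∈ T := mem_typeClassX_of_mem_joint hp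
    have hg : g p.1 = S.equivFin
        ⟨(φ0 p.1, idxIn T φ0 p.1 / c), Finset.mem_image_of_mem _ hpT⟩ := dif_pos hpT
    have h2 : ψ2 (g p.1, φ2 p.2) = p.2 := by
      rw [hψ2def]
      show ψ (((S.equivFin.symm (g p.1) : { z // z ∈ S }) : M0 × ℕ).1, φ2 p.2) = p.2
      rw [hg, Equiv.symm_apply_apply]
      exact hOK
    have hex : ∃ x, x ∈ T ∧ g x = g p.1 ∧
        idxIn T φ0 x % c = ((⟨idxIn T φ0 p.1 % c, Nat.mod_lt _ hc0⟩ : Fin c) : ℕ) :=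
      ⟨p.1, hpT, rfl, rfl⟩
    have h1 : ψ1 (g p.1, ⟨idxIn T φ0 p.1 % c, Nat.mod_lt _ hc0⟩) = p.1 := by
      rw [hψ1def]
      show dite _ _ _ = p.1
      rw [dif_pos hex]
      obtain ⟨hxT, hgx, hmod⟩ := hex.choose_spec
      have hgx' : g hex.choose = S.equivFin
          ⟨(φ0 hex.choose, idxIn T φ0 hex.choose / c),
            Finset.mem_image_of_mem _ hxT⟩ := dif_pos hxT
      have hgx2 := S.equivFin.injective (hgx'.symm.trans (hgx.trans hg))
      have hfeq := Subtype.ext_iff.mp hgx2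
      have hφeq : φ0 hex.choose = φ0 p.1 := congrArg Prod.fst hfeq
      have hdiv : idxIn T φ0 hex.choose / c = idxIn T φ0 p.1 / c :=
        congrArg Prod.snd hfeq
      have hmod' : idxIn T φ0 hex.choose % c = idxIn T φ0 p.1 % c := hmod
      have hidx : idxIn T φ0 hex.choose = idxIn T φ0 p.1 := by
        conv_lhs => rw [← Nat.div_add_mod (idxIn T φ0 hex.choose) c]
        conv_rhs => rw [← Nat.div_add_mod (idxIn T φ0 p.1) c]
        rw [hdiv, hmod']
      exact idxIn_inj T φ0 hxT hpT hφeq hidx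
    exact Prod.ext h1 h2
  exact err_le _ _ _ _ _ _ _ _ hrec
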